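/- Let C be a circle of radius r in ℂ and let w be a point outside C. For the function f_w(z) = arg(w − z) on C, the total variation of f_w along C is at most 2π and also at most 4r/dist(w, C). -/

import Mathlib

set_option maxHeartbeats 1000000
open Real


lemma aux_exists_cos_zero (m : ℝ) : ∃ x, m ≤ x ∧ x ≤ m + π ∧ Real.cos x = 0 := by
  refine ⟨π/2 + ⌈(m - π/2)/π⌉ * π, ?_, ?_, ?_⟩
  · have h1 : (m - π/2)/π ≤ (⌈(m - π/2)/π⌉ : ℝ) := Int.le_ceil _
    have := (div_le_iff₀ pi_pos).mp h1
    linarith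
  · have h1 : (⌈(m - π/2)/π⌉ : ℝ) ≤ (m - π/2)/π + 1 := by
      have := Int.ceil_lt_add_one ((m - π/2)/π)
      linarith
    have h2 : (⌈(m - π/2)/π⌉ : ℝ) * π ≤ ((m - π/2)/π + 1) * π :=
      mul_le_mul_of_nonneg_right h1 pi_pos.le
    have h3 : ((m - π/2)/π + 1) * π = m - π/2 + π := by field_simp
    linarith
  · rw [Real.cos_add]
    simp [Real.sin_int_mul_pi]

lemma aux_exp_inj {s t : ℝ} (h : Complex.exp ((s:ℂ) * Complex.I) = Complex.exp ((t:ℂ) * Complex.I))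
    (hlt : |s - t| < 2*π) : s = t := by
  rw [Complex.exp_eq_exp_iff_exists_int] at h
  obtain ⟨n, hn⟩ := h
  have him : s = t + n * (2*π) := by
    have := congrArg Complex.im hn
    simpa using this
  have habs : |s - t| = |(n:ℝ)| * (2*π) := by
    rw [him]
    rw [show t + (n:ℝ)*(2*π) - t = (n:ℝ)*(2*π) by ring, abs_mul,
      abs_of_pos (by positivity : (0:ℝ) < 2*π)]
  have h1 : |(n:ℝ)| < 1 := by
    rw [habs] at hlt
    nlinarith [pi_pos]
  have : |n| < 1 := by exact_mod_cast (by rw [← Int.cast_abs] at h1; exact_mod_cast h1 : ((|n|:ℤ):ℝ) < 1)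
  have hn0 : n = 0 := by rw [abs_lt] at this; omega
  rw [him, hn0]; simp

lemma aux_window {b : ℝ → ℝ} (hb : Continuous b) (hpos : ∀ t, 0 < Real.cos (b t))
    (s t : ℝ) : |b s - b t| < π := by
  by_contra hcon
  push_neg at hcon
  obtain ⟨x, hx1, hx2, hx3⟩ := aux_exists_cos_zero (min (b s) (b t))
  have hxmem : x ∈ Set.uIcc (b s) (b t) := by
    rw [Set.uIcc_eq_union]
    rcases le_total (b s) (b t) with h|h
    · have : min (b s) (b t) = b s := min_eq_left h
      rw [this] at hx1 hx2
      have : π ≤ b t - b s := by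
        rcases abs_cases (b s - b t) with ⟨h1,h2⟩|⟨h1,h2⟩ <;> linarith [pi_pos]
      left; exact Set.mem_Icc.mpr ⟨hx1, by linarith⟩
    · have : min (b s) (b t) = b t := min_eq_right h
      rw [this] at hx1 hx2
      have : π ≤ b s - b t := by
        rcases abs_cases (b s - b t) with ⟨h1,h2⟩|⟨h1,h2⟩ <;> linarith
      right; exact Set.mem_Icc.mpr ⟨hx1, by linarith⟩
  obtain ⟨θ, _, hθ⟩ := intermediate_value_uIcc (a := s) (b := t) hb.continuousOn hxmem
  have := hpos θ
  rw [hθ, hx3] at this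
  exact lt_irrefl 0 this

lemma aux_arcsin_le {q : ℝ} (h0 : 0 < q) (h1 : q < 1) : Real.arcsin q ≤ q / (1 - q) := by
  have ha0 : 0 < Real.arcsin q := Real.arcsin_pos.mpr h0
  have ha2 : Real.arcsin q < π/2 := Real.arcsin_lt_pi_div_two.mpr h1
  have htan := Real.lt_tan ha0 ha2
  rw [Real.tan_arcsin] at htan
  have hsq : Real.sqrt (1 - q^2) ≥ 1 - q := by
    rw [show (1:ℝ) - q^2 = (1-q)*(1+q) by ring]
    have h2 : ((1:ℝ)-q)^2 ≤ (1-q)*(1+q) := by nlinarith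
    calc (1:ℝ) - q = Real.sqrt ((1-q)^2) := by rw [Real.sqrt_sq (by linarith)]
    _ ≤ Real.sqrt ((1-q)*(1+q)) := Real.sqrt_le_sqrt h2
  have hpos : 0 < Real.sqrt (1 - q^2) := by
    apply Real.sqrt_pos.mpr; nlinarith
  have : q / Real.sqrt (1 - q^2) ≤ q / (1 - q) := by
    apply div_le_div_of_nonneg_left h0.le (by linarith) hsq
  linarith


lemma aux_infdist (z₀ w : ℂ) (r : ℝ) (hr : 0 < r) (hout : r < ‖w - z₀‖) :
    Metric.infDist w (Metric.sphere z₀ r) = ‖w - z₀‖ - r := by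
  set R := ‖w - z₀‖ with hR
  have hR0 : 0 < R := lt_trans hr hout
  apply le_antisymm
  · have hmem : z₀ + (r/R : ℝ) • (w - z₀) ∈ Metric.sphere z₀ r := by
      simp only [Metric.mem_sphere, dist_eq_norm]
      rw [show z₀ + (r/R : ℝ) • (w - z₀) - z₀ = (r/R : ℝ) • (w - z₀) by ring_nf]
      rw [norm_smul]
      simp only [norm_div, Real.norm_eq_abs, abs_of_pos hr]
      rw [← hR]
      field_simp [abs_of_pos hR0]
      rw [abs_of_pos hR0]
    have := Metric.infDist_le_dist_of_mem (x := w) hmem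
    refine le_trans this (le_of_eq ?_)
    rw [dist_eq_norm]
    rw [show w - (z₀ + (r/R : ℝ) • (w - z₀)) = (1 - r/R : ℝ) • (w - z₀) by
      rw [Complex.real_smul, Complex.real_smul]; push_cast; ring]
    rw [norm_smul, Real.norm_eq_abs, abs_of_pos (by rw [sub_pos, div_lt_one hR0]; exact hout : (0:ℝ) < 1 - r/R)]
    rw [← hR]
    field_simp
  · by_contra hcon
    push_neg at hcon
    have hne : (Metric.sphere z₀ r).Nonempty := NormedSpace.sphere_nonempty.mpr hr.le
    obtain ⟨y, hy, hdy⟩ := (Metric.infDist_lt_iff hne).mp hcon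
    have h1 : dist w z₀ ≤ dist w y + dist y z₀ := dist_triangle w y z₀
    have h2 : dist y z₀ = r := Metric.mem_sphere.mp hy
    have h3 : dist w z₀ = R := by rw [dist_eq_norm]
    linarith

lemma aux_deriv (c : ℂ) (r : ℝ) (a : ℝ → ℝ) (hr : 0 < r) (hout : r < ‖c‖)
    (hdiff : Differentiable ℝ a)
    (ha : ∀ θ : ℝ, c - (r:ℂ) * Complex.exp ((θ:ℂ) * Complex.I) =
      (‖c - (r:ℂ) * Complex.exp ((θ:ℂ) * Complex.I)‖ : ℂ) *
        Complex.exp ((a θ : ℂ) * Complex.I)) (θ : ℝ) :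
    HasDerivAt a (r * (r - ‖c‖ * Real.cos (θ - Complex.arg c)) /
      ((‖c‖)^2 + r^2 - 2*r*(‖c‖)*Real.cos (θ - Complex.arg c))) θ := by
  set R := ‖c‖ with hRdef
  set φ := Complex.arg c with hφdef
  have hR0 : 0 < R := lt_trans hr hout
  set W : ℝ → ℂ := fun t => c - (r:ℂ) * Complex.exp ((t:ℂ) * Complex.I) with hWdef
  set ρ : ℝ := ‖W θ‖ with hρdef
  have hrabs : ∀ t : ℝ, ‖(r:ℂ) * Complex.exp ((t:ℂ) * Complex.I)‖ = r := by
    intro t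
    rw [norm_mul, Complex.norm_exp_ofReal_mul_I, Complex.norm_real, Real.norm_eq_abs, abs_of_pos hr, mul_one]
  have hWlb : ∀ t : ℝ, R - r ≤ ‖W t‖ := by
    intro t
    have h1 : ‖c‖ ≤ ‖W t‖ + ‖(r:ℂ) * Complex.exp ((t:ℂ) * Complex.I)‖ := by
      calc ‖c‖ = ‖W t + (r:ℂ) * Complex.exp ((t:ℂ) * Complex.I)‖ := by
            rw [hWdef]; ring_nf
        _ ≤ _ := norm_add_le _ _
    rw [hrabs t] at h1
    linarith
  have hρpos : 0 < ρ := lt_of_lt_of_le (by linarith) (hWlb θ)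
  -- derivative of W
  have hd := (hdiff θ).hasDerivAt
  have hexpθ : HasDerivAt (fun t : ℝ => Complex.exp ((t:ℂ) * Complex.I))
      (Complex.exp ((θ:ℂ) * Complex.I) * Complex.I) θ := by
    have h1 : HasDerivAt (fun z : ℂ => Complex.exp (z * Complex.I))
        (Complex.exp ((θ:ℂ) * Complex.I) * Complex.I) (θ:ℂ) := by
      exact ((Complex.hasDerivAt_exp ((θ:ℂ)*Complex.I)).comp (θ:ℂ)
        (hasDerivAt_mul_const Complex.I))
    exact h1.comp_ofReal
  have hWd : HasDerivAt W (-((r:ℂ) * (Complex.exp ((θ:ℂ) * Complex.I) * Complex.I))) θ := by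
    simpa using (HasDerivAt.const_sub c (hexpθ.const_mul (r:ℂ)))
  have hAd : HasDerivAt (fun t : ℝ => -(((a t : ℝ) : ℂ) * Complex.I))
      (-(((deriv a θ : ℝ) : ℂ) * Complex.I)) θ := ((hd.ofReal_comp).mul_const Complex.I).neg
  have hexpA : HasDerivAt (fun t : ℝ => Complex.exp (-(((a t : ℝ) : ℂ) * Complex.I)))
      (Complex.exp (-(((a θ : ℝ) : ℂ) * Complex.I)) * (-(((deriv a θ : ℝ) : ℂ) * Complex.I))) θ :=
    (Complex.hasDerivAt_exp _).comp θ hAd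
  have hu : HasDerivAt (fun t => W t * Complex.exp (-(((a t : ℝ) : ℂ) * Complex.I)))
      (-((r:ℂ) * (Complex.exp ((θ:ℂ) * Complex.I) * Complex.I)) *
          Complex.exp (-(((a θ : ℝ) : ℂ) * Complex.I)) +
        W θ * (Complex.exp (-(((a θ : ℝ) : ℂ) * Complex.I)) * (-(((deriv a θ : ℝ) : ℂ) * Complex.I)))) θ :=
    hWd.mul hexpA
  have hureal : ∀ t : ℝ, W t * Complex.exp (-(((a t : ℝ) : ℂ) * Complex.I)) =
      ((‖W t‖ : ℝ) : ℂ) := by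
    intro t
    show (c - (r:ℂ) * Complex.exp ((t:ℂ) * Complex.I)) * Complex.exp (-(((a t : ℝ) : ℂ) * Complex.I)) = _
    rw [ha t, mul_assoc, ← Complex.exp_add]
    simp
    rfl
  have him : (-((r:ℂ) * (Complex.exp ((θ:ℂ) * Complex.I) * Complex.I)) *
          Complex.exp (-(((a θ : ℝ) : ℂ) * Complex.I)) +
        W θ * (Complex.exp (-(((a θ : ℝ) : ℂ) * Complex.I)) * (-(((deriv a θ : ℝ) : ℂ) * Complex.I)))).im
      = 0 := by
    have h0 : HasDerivAt (fun t => (W t * Complex.exp (-(((a t : ℝ) : ℂ) * Complex.I))).im)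
        ((-((r:ℂ) * (Complex.exp ((θ:ℂ) * Complex.I) * Complex.I)) *
          Complex.exp (-(((a θ : ℝ) : ℂ) * Complex.I)) +
        W θ * (Complex.exp (-(((a θ : ℝ) : ℂ) * Complex.I)) * (-(((deriv a θ : ℝ) : ℂ) * Complex.I)))).im) θ :=
      (Complex.imCLM.hasFDerivAt.comp_hasDerivAt θ hu)
    have h1 : (fun t => (W t * Complex.exp (-(((a t : ℝ) : ℂ) * Complex.I))).im) = fun _ => (0:ℝ) := by
      funext t; rw [hureal t]; simp
    rw [h1] at h0
    exact h0.unique (hasDerivAt_const θ 0)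
  -- second term of him
  set d := deriv a θ with hddef
  have hsec : (W θ * (Complex.exp (-(((a θ : ℝ) : ℂ) * Complex.I)) * (-(((d : ℝ) : ℂ) * Complex.I)))).im
      = -(d * ρ) := by
    rw [← mul_assoc, hureal θ]
    simp [hρdef]
    ring
  have hTim : (-((r:ℂ) * (Complex.exp ((θ:ℂ) * Complex.I) * Complex.I)) *
      Complex.exp (-(((a θ : ℝ) : ℂ) * Complex.I))).im = d * ρ := by
    rw [Complex.add_im] at him
    rw [hsec] at him
    linarith
  have hconjW : Complex.exp (-(((a θ : ℝ) : ℂ) * Complex.I)) * ((ρ:ℝ):ℂ) =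
      (starRingEnd ℂ) (W θ) := by
    have h2 := congrArg (starRingEnd ℂ) (ha θ)
    have h3 : (starRingEnd ℂ) (c - (r:ℂ) * Complex.exp ((θ:ℂ) * Complex.I)) = (starRingEnd ℂ) (W θ) := rfl
    rw [h3] at h2
    have hconj2 : (starRingEnd ℂ) (((a θ:ℝ):ℂ) * Complex.I) = -(((a θ:ℝ):ℂ) * Complex.I) := by
      rw [map_mul, Complex.conj_ofReal, Complex.conj_I]; ring
    rw [h2, map_mul, ← Complex.exp_conj, hconj2, Complex.conj_ofReal, mul_comm]
  have hkey : d * ρ^2 = (-((r:ℂ) * (Complex.exp ((θ:ℂ) * Complex.I) * Complex.I)) *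
      ((starRingEnd ℂ) (W θ))).im := by
    rw [← hconjW, ← mul_assoc]
    rw [Complex.mul_im]
    simp only [Complex.ofReal_re, Complex.ofReal_im]
    rw [hTim]
    ring
  -- explicit computation of the RHS
  have hre : c.re = R * Real.cos φ := by
    have hc0 : c ≠ 0 := by
      intro h
      rw [hRdef, h] at hR0
      simp at hR0
    rw [hRdef, hφdef, Complex.cos_arg hc0]
    field_simp
  have him2 : c.im = R * Real.sin φ := by
    rw [hRdef, hφdef, Complex.sin_arg]
    field_simp
    rw [mul_div_cancel_right₀ _ hR0.ne']
  have hWre : (W θ).re = c.re - r * Real.cos θ := by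
    simp [hWdef, Complex.exp_mul_I, Complex.mul_re, Complex.mul_im,
      ← Complex.ofReal_cos, ← Complex.ofReal_sin]
  have hWim : (W θ).im = c.im - r * Real.sin θ := by
    simp [hWdef, Complex.exp_mul_I, Complex.mul_re, Complex.mul_im,
      ← Complex.ofReal_cos, ← Complex.ofReal_sin]
  have hrhs : (-((r:ℂ) * (Complex.exp ((θ:ℂ) * Complex.I) * Complex.I)) *
      ((starRingEnd ℂ) (W θ))).im = r^2 - r * R * Real.cos (θ - φ) := by
    rw [Complex.mul_im]
    simp only [Complex.conj_re, Complex.conj_im, Complex.neg_re, Complex.neg_im,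
      Complex.mul_re, Complex.mul_im, Complex.I_re, Complex.I_im,
      Complex.ofReal_re, Complex.ofReal_im]
    rw [hWre, hWim, hre, him2]
    rw [Real.cos_sub]
    simp [Complex.exp_mul_I, Complex.add_re, Complex.add_im, Complex.mul_re, Complex.mul_im,
      ← Complex.ofReal_cos, ← Complex.ofReal_sin]
    nlinarith [Real.sin_sq_add_cos_sq θ]
  have hρsq : ρ^2 = R^2 + r^2 - 2*r*R*Real.cos (θ - φ) := by
    rw [hρdef, Complex.sq_norm]
    rw [Complex.normSq_apply, hWre, hWim, hre, him2, Real.cos_sub]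
    have h1 := Real.sin_sq_add_cos_sq θ
    have h2 := Real.sin_sq_add_cos_sq φ
    nlinarith
  have hdenom : (0:ℝ) < R^2 + r^2 - 2*r*R*Real.cos (θ - φ) := by
    nlinarith [Real.cos_le_one (θ - φ), Real.neg_one_le_cos (θ - φ)]
  have hfinal : d = r * (r - R * Real.cos (θ - φ)) /
      (R^2 + r^2 - 2*r*R*Real.cos (θ - φ)) := by
    rw [hrhs] at hkey
    rw [hρsq] at hkey
    rw [eq_div_iff hdenom.ne']
    linear_combination hkey
  rw [← hfinal]
  exact hd

/-- Let `C` be the circle of radius `r > 0` centered at `z₀` and let `w` lie strictly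
outside the closed disk bounded by `C`. If `a : ℝ → ℝ` is a differentiable continuous
choice of `arg(w − z)` along the circle (`z = z₀ + r e^{iθ}`), then the total variation
`∫₀^{2π} |a'(θ)| dθ` is at most `2π` and at most `4r / dist(w, C)`. -/
theorem variation_of_arg_on_circle
    (z₀ w : ℂ) (r : ℝ) (hr : 0 < r) (hout : r < ‖w - z₀‖)
    (a : ℝ → ℝ) (hdiff : Differentiable ℝ a)
    (ha : ∀ θ : ℝ, w - (z₀ + (r : ℂ) * Complex.exp (θ * Complex.I)) =
      (‖w - (z₀ + (r : ℂ) * Complex.exp (θ * Complex.I))‖ : ℂ) *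
        Complex.exp ((a θ : ℂ) * Complex.I)) :
    (∫ θ in (0:ℝ)..(2 * π), |deriv a θ|) ≤ 2 * π ∧
    (∫ θ in (0:ℝ)..(2 * π), |deriv a θ|) ≤
      4 * r / Metric.infDist w (Metric.sphere z₀ r) := by
  set c : ℂ := w - z₀ with hcdef
  set R : ℝ := ‖c‖ with hRdef
  set φ : ℝ := Complex.arg c with hφdef
  have hR0 : 0 < R := lt_trans hr hout
  have hc0 : c ≠ 0 := by
    intro h; rw [hRdef, h] at hR0; simp at hR0
  have hc : ((R:ℝ):ℂ) * Complex.exp ((φ:ℂ) * Complex.I) = c := by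
    rw [hRdef, hφdef]; exact Complex.norm_mul_exp_arg_mul_I c
  set W : ℝ → ℂ := fun t => c - (r:ℂ) * Complex.exp ((t:ℂ) * Complex.I) with hWdef
  have hWeq : ∀ θ : ℝ, w - (z₀ + (r:ℂ) * Complex.exp ((θ:ℂ) * Complex.I)) = W θ := by
    intro θ; simp only [hWdef, hcdef]; ring
  have ha' : ∀ θ : ℝ, W θ = (‖W θ‖ : ℂ) * Complex.exp ((a θ : ℂ) * Complex.I) := by
    intro θ
    have := ha θ
    rw [hWeq θ] at this
    exact this
  have hrabs : ∀ t : ℝ, ‖(r:ℂ) * Complex.exp ((t:ℂ) * Complex.I)‖ = r := by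
    intro t
    rw [norm_mul, Complex.norm_exp_ofReal_mul_I, Complex.norm_real, Real.norm_eq_abs, abs_of_pos hr, mul_one]
  have hWlb : ∀ t : ℝ, R - r ≤ ‖W t‖ := by
    intro t
    have h1 : ‖c‖ ≤ ‖W t‖ + ‖(r:ℂ) * Complex.exp ((t:ℂ) * Complex.I)‖ := by
      calc ‖c‖ = ‖W t + (r:ℂ) * Complex.exp ((t:ℂ) * Complex.I)‖ := by
            rw [hWdef]; ring_nf
        _ ≤ _ := norm_add_le _ _
    rw [hrabs t] at h1
    rw [hRdef]
    linarith
  have hWpos : ∀ t : ℝ, 0 < ‖W t‖ := fun t =>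
    lt_of_lt_of_le (by linarith) (hWlb t)
  -- coordinates of c
  have hcre : c.re = R * Real.cos φ := by
    rw [hRdef, hφdef, Complex.cos_arg hc0]; field_simp
  have hcim : c.im = R * Real.sin φ := by
    rw [hRdef, hφdef, Complex.sin_arg]; field_simp
  have hnormc : c.re^2 + c.im^2 = R^2 := by
    rw [hRdef, Complex.sq_norm, Complex.normSq_apply]; ring
  -- the window : cos (a θ - φ) > 0
  have hcos : ∀ θ : ℝ, 0 < Real.cos (a θ - φ) := by
    intro θ
    set ρ : ℝ := ‖W θ‖ with hρdef
    have hX : W θ * (starRingEnd ℂ) c = ((ρ * R : ℝ) : ℂ) *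
        Complex.exp (((a θ - φ : ℝ) : ℂ) * Complex.I) := by
      rw [ha' θ, ← hc]
      rw [map_mul, ← Complex.exp_conj]
      have h1 : (starRingEnd ℂ) (((φ:ℝ):ℂ) * Complex.I) = -(((φ:ℝ):ℂ) * Complex.I) := by
        rw [map_mul, Complex.conj_ofReal, Complex.conj_I]; ring
      rw [h1, Complex.conj_ofReal]
      rw [show ((ρ:ℝ):ℂ) * Complex.exp ((a θ:ℂ) * Complex.I) * (((R:ℝ):ℂ) * Complex.exp (-(((φ:ℝ):ℂ) * Complex.I)))
        = ((ρ:ℝ):ℂ) * ((R:ℝ):ℂ) * (Complex.exp (((a θ):ℂ) * Complex.I) * Complex.exp (-(((φ:ℝ):ℂ) * Complex.I))) by ring]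
      rw [← Complex.exp_add]
      push_cast
      ring_nf
    have hre1 : (W θ * (starRingEnd ℂ) c).re = ρ * R * Real.cos (a θ - φ) := by
      rw [hX, Complex.mul_re, Complex.exp_ofReal_mul_I_re]
      simp [Complex.exp_ofReal_mul_I_im]
    have hre2 : R * (R - r) ≤ (W θ * (starRingEnd ℂ) c).re := by
      rw [Complex.mul_re]
      simp only [Complex.conj_re, Complex.conj_im]
      have hWre : (W θ).re = c.re - r * Real.cos θ := by
        simp [hWdef, Complex.exp_mul_I, Complex.mul_re, Complex.mul_im,
          ← Complex.ofReal_cos, ← Complex.ofReal_sin]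
      have hWim : (W θ).im = c.im - r * Real.sin θ := by
        simp [hWdef, Complex.exp_mul_I, Complex.mul_re, Complex.mul_im,
          ← Complex.ofReal_cos, ← Complex.ofReal_sin]
      rw [hWre, hWim]
      have hcs := Real.sin_sq_add_cos_sq θ
      have hu : Real.cos θ * c.re + Real.sin θ * c.im ≤ R := by
        nlinarith [sq_nonneg (Real.cos θ * c.im - Real.sin θ * c.re),
          sq_nonneg (Real.cos θ * c.re + Real.sin θ * c.im - R),
          sq_nonneg (Real.cos θ * c.re + Real.sin θ * c.im + R), hR0.le]
      have hu2 : r * (Real.cos θ * c.re + Real.sin θ * c.im) ≤ r * R :=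
        mul_le_mul_of_nonneg_left hu hr.le
      nlinarith [hnormc]
    have hρpos := hWpos θ
    rw [hre1] at hre2
    by_contra hcc
    push_neg at hcc
    have h5 : ρ * R * Real.cos (a θ - φ) ≤ ρ * R * 0 :=
      mul_le_mul_of_nonneg_left hcc (by positivity)
    have h6 : 0 < R * (R - r) := mul_pos hR0 (by linarith)
    rw [mul_zero] at h5
    linarith
  have hwin : ∀ u v : ℝ, |a u - a v| < π := by
    intro u v
    have := aux_window (b := fun t => a t - φ)
      (by exact (hdiff.continuous).sub continuous_const)
      (fun t => hcos t) u v
    simpa using this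
  
  -- special angles
  set q : ℝ := r / R with hqdef
  have hq0 : 0 < q := div_pos hr hR0
  have hq1 : q < 1 := (div_lt_one hR0).mpr hout
  have hrRq : R * q = r := by rw [hqdef]; field_simp
  set v : ℝ := Real.sqrt (1 - q^2) with hvdef
  have hvsq : v^2 = 1 - q^2 := Real.sq_sqrt (by nlinarith)
  have hv0 : 0 < v := Real.sqrt_pos.mpr (by nlinarith)
  set α : ℝ := Real.arccos q with hαdef
  set s : ℝ := Real.arcsin q with hsdef
  have hα0 : 0 ≤ α := Real.arccos_nonneg q
  have hαle : α ≤ π/2 := Real.arccos_le_pi_div_two.mpr hq0.le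
  have hs0 : 0 < s := Real.arcsin_pos.mpr hq0
  have hslt : s < π/2 := Real.arcsin_lt_pi_div_two.mpr hq1
  have hcosα : Real.cos α = q := Real.cos_arccos (by linarith) (by linarith)
  have hsinα : Real.sin α = v := by rw [hαdef, Real.sin_arccos, hvdef]
  have hcoss : Real.cos s = v := by rw [hsdef, Real.cos_arcsin, hvdef]
  have hsins : Real.sin s = q := Real.sin_arcsin (by linarith) (by linarith)
  set t₁ : ℝ := φ + α with ht₁def
  set t₂ : ℝ := φ + (2*π - α) with ht₂def
  have hexpre : ∀ x : ℝ, Complex.exp ((x:ℂ) * Complex.I) =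
      ((Real.cos x : ℝ) : ℂ) + ((Real.sin x : ℝ) : ℂ) * Complex.I := by
    intro x
    rw [Complex.exp_mul_I, ← Complex.ofReal_cos, ← Complex.ofReal_sin]
  -- values of W at t₁ and t₂
  have hWt1 : W t₁ = ((R*v : ℝ) : ℂ) * Complex.exp (((φ - s : ℝ) : ℂ) * Complex.I) := by
    rw [hWdef]
    simp only
    rw [← hc, hexpre t₁, hexpre (φ - s), hexpre φ]
    apply Complex.ext
    · simp only [Complex.sub_re, Complex.mul_re, Complex.add_re, Complex.add_im, Complex.mul_im,
        Complex.ofReal_re, Complex.ofReal_im, Complex.I_re, Complex.I_im,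
        mul_zero, zero_mul, mul_one, sub_zero, add_zero, zero_add, neg_zero, zero_sub]
      rw [ht₁def, Real.cos_add, Real.cos_sub, hcosα, hsinα, hcoss, hsins]
      linear_combination (Real.cos φ * q - Real.sin φ * v) * hrRq - R * Real.cos φ * hvsq
    · simp only [Complex.sub_im, Complex.mul_re, Complex.add_re, Complex.add_im, Complex.mul_im,
        Complex.ofReal_re, Complex.ofReal_im, Complex.I_re, Complex.I_im,
        mul_zero, zero_mul, mul_one, sub_zero, add_zero, zero_add, neg_zero, zero_sub]
      rw [ht₁def, Real.sin_add, Real.sin_sub, hcosα, hsinα, hcoss, hsins]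
      linear_combination (Real.sin φ * q + Real.cos φ * v) * hrRq - R * Real.sin φ * hvsq
  have hWt2 : W t₂ = ((R*v : ℝ) : ℂ) * Complex.exp (((φ + s : ℝ) : ℂ) * Complex.I) := by
    rw [hWdef]
    simp only
    rw [← hc, hexpre t₂, hexpre (φ + s), hexpre φ]
    apply Complex.ext
    · simp only [Complex.sub_re, Complex.mul_re, Complex.add_re, Complex.add_im, Complex.mul_im,
        Complex.ofReal_re, Complex.ofReal_im, Complex.I_re, Complex.I_im,
        mul_zero, zero_mul, mul_one, sub_zero, add_zero, zero_add, neg_zero, zero_sub]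
      rw [ht₂def, show φ + (2*π - α) = (φ - α) + 2*π by ring, Real.cos_add_two_pi,
        Real.cos_sub, Real.cos_add, hcosα, hsinα, hcoss, hsins]
      linear_combination (Real.cos φ * q + Real.sin φ * v) * hrRq - R * Real.cos φ * hvsq
    · simp only [Complex.sub_im, Complex.mul_re, Complex.add_re, Complex.add_im, Complex.mul_im,
        Complex.ofReal_re, Complex.ofReal_im, Complex.I_re, Complex.I_im,
        mul_zero, zero_mul, mul_one, sub_zero, add_zero, zero_add, neg_zero, zero_sub]
      rw [ht₂def, show φ + (2*π - α) = (φ - α) + 2*π by ring, Real.sin_add_two_pi,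
        Real.sin_sub, Real.sin_add, hcosα, hsinα, hcoss, hsins]
      linear_combination (Real.sin φ * q - Real.cos φ * v) * hrRq - R * Real.sin φ * hvsq
  have hRv0 : (0:ℝ) < R * v := mul_pos hR0 hv0
  have habs1 : ‖W t₁‖ = R*v := by
    rw [hWt1, norm_mul, Complex.norm_real, Real.norm_eq_abs, Complex.norm_exp_ofReal_mul_I, abs_of_pos hRv0, mul_one]
  have habs2 : ‖W t₂‖ = R*v := by
    rw [hWt2, norm_mul, Complex.norm_real, Real.norm_eq_abs, Complex.norm_exp_ofReal_mul_I, abs_of_pos hRv0, mul_one]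
  have hexp1 : Complex.exp ((a t₁ : ℂ) * Complex.I) = Complex.exp (((φ - s : ℝ) : ℂ) * Complex.I) := by
    have h1 := ha' t₁
    rw [habs1, hWt1] at h1
    exact (mul_left_cancel₀ (by exact_mod_cast hRv0.ne' : ((R*v:ℝ):ℂ) ≠ 0) h1.symm)
  have hexp2 : Complex.exp ((a t₂ : ℂ) * Complex.I) = Complex.exp (((φ + s : ℝ) : ℂ) * Complex.I) := by
    have h1 := ha' t₂
    rw [habs2, hWt2] at h1
    exact (mul_left_cancel₀ (by exact_mod_cast hRv0.ne' : ((R*v:ℝ):ℂ) ≠ 0) h1.symm)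
  -- the crucial exact values
  have hdiff21 : a t₂ - a t₁ = 2*s := by
    apply aux_exp_inj
    · rw [show ((a t₂ - a t₁ : ℝ) : ℂ) * Complex.I = (a t₂ : ℂ) * Complex.I - (a t₁ : ℂ) * Complex.I by push_cast; ring]
      rw [Complex.exp_sub, hexp1, hexp2, ← Complex.exp_sub]
      congr 1
      push_cast
      ring
    · have h1 := hwin t₂ t₁
      have h2 : |a t₂ - a t₁ - 2*s| ≤ |a t₂ - a t₁| + |2*s| := abs_sub _ _
      rw [abs_of_pos (by linarith : (0:ℝ) < 2*s)] at h2
      linarith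
  have h2pi : a (φ + 2*π) = a φ := by
    apply aux_exp_inj
    · have hW2 : W (φ + 2*π) = W φ := by
        rw [hWdef]
        simp only
        congr 2
        rw [show (((φ + 2*π : ℝ)):ℂ) * Complex.I = (φ:ℂ) * Complex.I + 2*(π:ℂ)*Complex.I by push_cast; ring]
        rw [Complex.exp_add, Complex.exp_two_pi_mul_I, mul_one]
      have h1 := ha' (φ + 2*π)
      rw [hW2] at h1
      have h2 := (h1.symm.trans (ha' φ))
      exact mul_left_cancel₀ (by exact_mod_cast (hWpos φ).ne' : ((‖W φ‖:ℝ):ℂ) ≠ 0) h2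
    · have h1 := hwin (φ + 2*π) φ
      linarith [pi_pos]
  
  -- the derivative function
  set F : ℝ → ℝ := fun x => r * (r - R * Real.cos (x - φ)) /
      (R^2 + r^2 - 2*r*R*Real.cos (x - φ)) with hFdef
  have hF : ∀ x : ℝ, HasDerivAt a (F x) x := fun x => aux_deriv c r a hr hout hdiff ha' x
  have hderiv : deriv a = F := funext fun x => (hF x).deriv
  have hdenompos : ∀ x : ℝ, 0 < R^2 + r^2 - 2*r*R*Real.cos (x - φ) := by
    intro x
    nlinarith [Real.cos_le_one (x - φ), mul_pos (sub_pos.mpr hout) (sub_pos.mpr hout),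
      mul_nonneg (mul_nonneg hr.le hR0.le) (sub_nonneg.mpr (Real.cos_le_one (x - φ)))]
  have hFcont : Continuous F := by
    apply Continuous.div
    · fun_prop
    · fun_prop
    · exact fun x => (hdenompos x).ne'
  have habsFcont : Continuous fun x => |F x| := hFcont.abs
  have hFval : ∀ x : ℝ, F x = r * (r - R * Real.cos (x - φ)) /
      (R^2 + r^2 - 2*r*R*Real.cos (x - φ)) := fun x => rfl
  have hper : Function.Periodic (fun x => |F x|) (2*π) := by
    intro t
    simp only
    congr 1
    rw [hFval, hFval, show t + 2*π - φ = (t - φ) + 2*π by ring, Real.cos_add_two_pi]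
  have hto1 : φ ≤ t₁ := by rw [ht₁def]; linarith
  have hto2 : t₁ ≤ t₂ := by rw [ht₁def, ht₂def]; linarith [pi_pos]
  have hto3 : t₂ ≤ φ + 2*π := by rw [ht₂def]; linarith
  have hFnonpos : ∀ x : ℝ, q ≤ Real.cos (x - φ) → F x ≤ 0 := by
    intro x hx
    rw [hFval, div_nonpos_iff]
    right
    constructor
    · have h1 : R * q ≤ R * Real.cos (x - φ) := mul_le_mul_of_nonneg_left hx hR0.le
      nlinarith [hrRq]
    · exact (hdenompos x).le
  have hFnonneg : ∀ x : ℝ, Real.cos (x - φ) ≤ q → 0 ≤ F x := by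
    intro x hx
    rw [hFval]
    apply div_nonneg _ (hdenompos x).le
    have h1 : R * Real.cos (x - φ) ≤ R * q := mul_le_mul_of_nonneg_left hx hR0.le
    nlinarith [hrRq]
  have hπle : α ≤ π := by linarith [pi_pos]
  have hc1 : ∀ x ∈ Set.uIcc φ t₁, q ≤ Real.cos (x - φ) := by
    intro x hx
    rw [Set.uIcc_of_le hto1, Set.mem_Icc] at hx
    have := Real.cos_le_cos_of_nonneg_of_le_pi (sub_nonneg.mpr hx.1) hπle
      (by rw [ht₁def] at hx; linarith [hx.2])
    rw [hcosα] at this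
    exact this
  have hc2 : ∀ x ∈ Set.uIcc t₁ t₂, Real.cos (x - φ) ≤ q := by
    intro x hx
    rw [Set.uIcc_of_le hto2, Set.mem_Icc] at hx
    have hx1 : α ≤ x - φ := by rw [ht₁def] at hx; linarith [hx.1]
    have hx2 : x - φ ≤ 2*π - α := by rw [ht₂def] at hx; linarith [hx.2]
    rcases le_total (x - φ) π with h|h
    · have := Real.cos_le_cos_of_nonneg_of_le_pi hα0 h hx1
      rw [hcosα] at this
      exact this
    · have h2 : Real.cos (x - φ) = Real.cos (2*π - (x - φ)) := (Real.cos_two_pi_sub (x - φ)).symm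
      rw [h2]
      have := Real.cos_le_cos_of_nonneg_of_le_pi hα0 (by linarith : 2*π - (x - φ) ≤ π)
        (by linarith : α ≤ 2*π - (x - φ))
      rw [hcosα] at this
      exact this
  have hc3 : ∀ x ∈ Set.uIcc t₂ (φ + 2*π), q ≤ Real.cos (x - φ) := by
    intro x hx
    rw [Set.uIcc_of_le hto3, Set.mem_Icc] at hx
    have hx1 : 2*π - α ≤ x - φ := by rw [ht₂def] at hx; linarith [hx.1]
    have hx2 : x - φ ≤ 2*π := by linarith [hx.2]
    have h2 : Real.cos (x - φ) = Real.cos (2*π - (x - φ)) := (Real.cos_two_pi_sub (x - φ)).symm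
    rw [h2]
    have := Real.cos_le_cos_of_nonneg_of_le_pi (by linarith : (0:ℝ) ≤ 2*π - (x - φ)) hπle
      (by linarith : 2*π - (x - φ) ≤ α)
    rw [hcosα] at this
    exact this
  have hFTC : ∀ u₁ u₂ : ℝ, ∫ x in u₁..u₂, F x = a u₂ - a u₁ := fun u₁ u₂ =>
    intervalIntegral.integral_eq_sub_of_hasDerivAt (fun x _ => hF x)
      (hFcont.intervalIntegrable u₁ u₂)
  have hI1 : ∫ x in φ..t₁, |F x| = a φ - a t₁ := by
    calc ∫ x in φ..t₁, |F x| = ∫ x in φ..t₁, -F x :=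
          intervalIntegral.integral_congr (fun x hx => by
            rw [abs_of_nonpos (hFnonpos x (hc1 x hx))])
      _ = -(a t₁ - a φ) := by rw [intervalIntegral.integral_neg, hFTC]
      _ = a φ - a t₁ := by ring
  have hI2 : ∫ x in t₁..t₂, |F x| = a t₂ - a t₁ := by
    calc ∫ x in t₁..t₂, |F x| = ∫ x in t₁..t₂, F x :=
          intervalIntegral.integral_congr (fun x hx => by
            rw [abs_of_nonneg (hFnonneg x (hc2 x hx))])
      _ = a t₂ - a t₁ := hFTC _ _
  have hI3 : ∫ x in t₂..(φ + 2*π), |F x| = a t₂ - a (φ + 2*π) := by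
    calc ∫ x in t₂..(φ + 2*π), |F x| = ∫ x in t₂..(φ + 2*π), -F x :=
          intervalIntegral.integral_congr (fun x hx => by
            rw [abs_of_nonpos (hFnonpos x (hc3 x hx))])
      _ = -(a (φ + 2*π) - a t₂) := by rw [intervalIntegral.integral_neg, hFTC]
      _ = a t₂ - a (φ + 2*π) := by ring
  have htotal : ∫ θ in (0:ℝ)..(2*π), |deriv a θ| = 4*s := by
    rw [hderiv]
    have hshift : ∫ θ in (0:ℝ)..(2*π), |F θ| = ∫ θ in φ..(φ + 2*π), |F θ| := by
      have := hper.intervalIntegral_add_eq 0 φ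
      simpa using this
    rw [hshift]
    rw [← intervalIntegral.integral_add_adjacent_intervals
      (habsFcont.intervalIntegrable φ t₁) (habsFcont.intervalIntegrable t₁ (φ + 2*π))]
    rw [← intervalIntegral.integral_add_adjacent_intervals
      (habsFcont.intervalIntegrable t₁ t₂) (habsFcont.intervalIntegrable t₂ (φ + 2*π))]
    rw [hI1, hI2, hI3, h2pi]
    linarith [hdiff21]
  rw [htotal]
  constructor
  · have := Real.arcsin_le_pi_div_two q
    rw [hsdef]
    linarith
  · rw [aux_infdist z₀ w r hr hout]
    have h1 : s ≤ q/(1-q) := aux_arcsin_le hq0 hq1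
    have h3 : (0:ℝ) < R - r := by linarith
    have h2 : q/(1-q) = r/(R-r) := by
      rw [div_eq_div_iff (by linarith : (1:ℝ)-q ≠ 0) h3.ne']
      rw [hqdef]
      field_simp
    have hgoal : (4:ℝ)*r/(‖w - z₀‖ - r) = 4*(r/(R-r)) := by
      rw [show ‖w - z₀‖ = R by rw [hRdef, hcdef]]
      ring
    rw [hgoal]
    have h4 : s ≤ r/(R-r) := h2 ▸ h1
    linarith
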